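/- Let X ∈ C²([0,1]) and q_i(0) = (1/N)X(i/N) − 1/N for i = 0,…,N with X(0) = X(1) = 1. Then the Fourier coefficients Q_j = √(2/N)·Σ_{i=1}^{N−1} q_i(0) sin(πij/N) satisfy |Q_j| ≤ (1/4)√(2/N)·α/j² for all j = 1,…,N−1, where α = ∫₀¹ |X''(y)| dy. -/

import Mathlib

open intervalIntegral Real Finset

lemma sum_shift (F : ℕ → ℝ) (n : ℕ) (h0 : F 0 = 0) (hn : F n = 0) :
    ∑ i ∈ Finset.range n, F (i + 1) = ∑ i ∈ Finset.range n, F i := by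
  have h1 := Finset.sum_range_succ' F n
  have h2 := Finset.sum_range_succ F n
  rw [h2] at h1
  linarith

lemma aux_deriv (X : ℝ → ℝ) (hX : ContDiff ℝ 2 X) :
    Differentiable ℝ X ∧ Differentiable ℝ (deriv X) ∧ Continuous (deriv (deriv X)) := by
  have h2 : ContDiff ℝ (1 + 1) X := by exact_mod_cast hX
  have h1 : ContDiff ℝ 1 (deriv X) := (contDiff_succ_iff_deriv.mp h2).2.2
  exact ⟨hX.differentiable (by norm_num), h1.differentiable (by norm_num),
    h1.continuous_deriv le_rfl⟩

lemma keyL (X : ℝ → ℝ) (hX : ContDiff ℝ 2 X) (a b : ℝ) (hab : a ≤ b) :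
    |(b - a) * deriv X b - X b + X a| ≤ ∫ s in a..b, (s - a) * |deriv (deriv X) s| := by
  obtain ⟨hd0, hd1, hc2⟩ := aux_deriv X hX
  have hint : IntervalIntegrable (fun s => (s - a) * deriv (deriv X) s) MeasureTheory.volume a b :=
    (Continuous.mul (by continuity) hc2).intervalIntegrable a b
  have hFTC : ∫ s in a..b, (s - a) * deriv (deriv X) s
      = ((b - a) * deriv X b - X b) - ((a - a) * deriv X a - X a) := by
    apply intervalIntegral.integral_eq_sub_of_hasDerivAt
    · intro s hs
      have h1 : HasDerivAt (fun s => (s - a) * deriv X s)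
          (1 * deriv X s + (s - a) * deriv (deriv X) s) s :=
        ((hasDerivAt_id s).sub_const a).mul (hd1 s).hasDerivAt
      have h2 : HasDerivAt (fun s => (s - a) * deriv X s - X s)
          (1 * deriv X s + (s - a) * deriv (deriv X) s - deriv X s) s :=
        h1.sub (hd0 s).hasDerivAt
      exact h2.congr_deriv (by ring)
    · exact hint
  have : |(b - a) * deriv X b - X b + X a| = |∫ s in a..b, (s - a) * deriv (deriv X) s| := by
    rw [hFTC]; ring_nf
  rw [this]
  calc |∫ s in a..b, (s - a) * deriv (deriv X) s|
      ≤ ∫ s in a..b, |(s - a) * deriv (deriv X) s| :=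
        intervalIntegral.abs_integral_le_integral_abs hab
    _ = ∫ s in a..b, (s - a) * |deriv (deriv X) s| := by
        apply intervalIntegral.integral_congr
        intro s hs
        rw [Set.uIcc_of_le hab] at hs
        dsimp only
        rw [abs_mul, abs_of_nonneg (by linarith [hs.1] : (0:ℝ) ≤ s - a)]

lemma keyR (X : ℝ → ℝ) (hX : ContDiff ℝ 2 X) (b c : ℝ) (hbc : b ≤ c) :
    |X c - (c - b) * deriv X b - X b| ≤ ∫ s in b..c, (c - s) * |deriv (deriv X) s| := by
  obtain ⟨hd0, hd1, hc2⟩ := aux_deriv X hX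
  have hint : IntervalIntegrable (fun s => (c - s) * deriv (deriv X) s) MeasureTheory.volume b c :=
    (Continuous.mul (by continuity) hc2).intervalIntegrable b c
  have hFTC : ∫ s in b..c, (c - s) * deriv (deriv X) s
      = ((c - c) * deriv X c + X c) - ((c - b) * deriv X b + X b) := by
    refine intervalIntegral.integral_eq_sub_of_hasDerivAt
      (f := fun s => (c - s) * deriv X s + X s) ?_ hint
    intro s hs
    have h1 : HasDerivAt (fun s => (c - s) * deriv X s)
        ((-1) * deriv X s + (c - s) * deriv (deriv X) s) s :=
      ((hasDerivAt_id s).const_sub c).mul (hd1 s).hasDerivAt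
    have h2 : HasDerivAt (fun s => (c - s) * deriv X s + X s)
        ((-1) * deriv X s + (c - s) * deriv (deriv X) s + deriv X s) s :=
      h1.add (hd0 s).hasDerivAt
    exact h2.congr_deriv (by ring)
  have : |X c - (c - b) * deriv X b - X b| = |∫ s in b..c, (c - s) * deriv (deriv X) s| := by
    rw [hFTC]; ring_nf
  rw [this]
  calc |∫ s in b..c, (c - s) * deriv (deriv X) s|
      ≤ ∫ s in b..c, |(c - s) * deriv (deriv X) s| :=
        intervalIntegral.abs_integral_le_integral_abs hbc
    _ = ∫ s in b..c, (c - s) * |deriv (deriv X) s| := by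
        apply intervalIntegral.integral_congr
        intro s hs
        rw [Set.uIcc_of_le hbc] at hs
        dsimp only
        rw [abs_mul, abs_of_nonneg (by linarith [hs.2] : (0:ℝ) ≤ c - s)]

set_option maxHeartbeats 1000000 in
/-- Estimate of the Fourier coefficients `Q_j` of the initial deviations
`q_i(0) = (1/N) X (i/N) - 1/N`: `|Q_j| ≤ (1/4) √(2/N) α / j²` where `α = ∫₀¹ |X''|`. -/
theorem stmt_8 (N : ℕ) (hN : 2 ≤ N) (X : ℝ → ℝ) (hX : ContDiff ℝ 2 X)
    (h0 : X 0 = 1) (h1 : X 1 = 1)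
    (α : ℝ) (hα : α = ∫ s in (0:ℝ)..1, |deriv (deriv X) s|) :
    ∀ j ∈ Set.Icc 1 (N-1),
      |Real.sqrt (2 / N) * ∑ i ∈ Finset.Icc 1 (N-1),
          ((1 / N) * X ((i : ℝ) / N) - 1 / N) * Real.sin (Real.pi * i * j / N)|
        ≤ (1 / 4) * Real.sqrt (2 / N) * α / (j : ℝ)^2 := by
  intro j hj
  obtain ⟨hd0, hd1, hc2⟩ := aux_deriv X hX
  obtain ⟨hj1, hj2⟩ := hj
  have hNpos : 0 < N := by omega
  have hNR : (0:ℝ) < N := by exact_mod_cast hNpos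
  have hjR : (0:ℝ) < j := by exact_mod_cast hj1
  have hjN : (j:ℝ) ≤ N := by
    have : j ≤ N := by omega
    exact_mod_cast this
  set a : ℕ → ℝ := fun k => (k:ℝ)/N with ha
  set q : ℕ → ℝ := fun i => (1/(N:ℝ)) * X (i/N) - 1/N with hq
  set v : ℕ → ℝ := fun i => Real.sin (Real.pi * i * j / N) with hv
  set A : ℕ → ℝ := fun k => ∫ s in a k..a (k+1), (s - a k) * |deriv (deriv X) s| with hA
  set B : ℕ → ℝ := fun k => ∫ s in a k..a (k+1), (a (k+1) - s) * |deriv (deriv X) s| with hB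
  have hak : ∀ k : ℕ, a (k+1) = a k + 1/N := by
    intro k; simp only [ha]; push_cast; ring
  have haste : ∀ k : ℕ, a k ≤ a (k+1) := by
    intro k; rw [hak k]; linarith [one_div_pos.mpr hNR]
  have hconta : Continuous fun s : ℝ => |deriv (deriv X) s| := hc2.abs
  have hAnn : ∀ k, 0 ≤ A k := by
    intro k
    apply intervalIntegral.integral_nonneg (haste k)
    intro u hu
    exact mul_nonneg (by linarith [hu.1]) (abs_nonneg _)
  have hBnn : ∀ k, 0 ≤ B k := by
    intro k
    apply intervalIntegral.integral_nonneg (haste k)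
    intro u hu
    exact mul_nonneg (by linarith [hu.2]) (abs_nonneg _)
  have hABsum : ∀ k, A k + B k = ∫ s in a k..a (k+1), (1/(N:ℝ)) * |deriv (deriv X) s| := by
    intro k
    rw [hA, hB]
    rw [← intervalIntegral.integral_add (f := fun s => (s - a k) * |deriv (deriv X) s|)
      (g := fun s => (a (k+1) - s) * |deriv (deriv X) s|)
      ((Continuous.mul (by continuity) hconta).intervalIntegrable _ _)
      ((Continuous.mul (by continuity) hconta).intervalIntegrable _ _)]
    apply intervalIntegral.integral_congr
    intro s _
    dsimp only
    rw [hak k]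
    ring
  have htot : ∑ k ∈ Finset.range N, (A k + B k) = (1/(N:ℝ)) * α := by
    have hadj := intervalIntegral.sum_integral_adjacent_intervals (μ := MeasureTheory.volume)
      (a := a) (n := N)
      (f := fun s => (1/(N:ℝ)) * |deriv (deriv X) s|)
      (fun k _ => (Continuous.mul continuous_const hconta).intervalIntegrable _ _)
    have ha0 : a 0 = 0 := by simp [ha]
    have haN : a N = 1 := by simp only [ha]; field_simp
    calc ∑ k ∈ Finset.range N, (A k + B k)
        = ∑ k ∈ Finset.range N, ∫ s in a k..a (k+1), (1/(N:ℝ)) * |deriv (deriv X) s| :=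
          Finset.sum_congr rfl fun k _ => hABsum k
      _ = ∫ s in (a 0)..(a N), (1/(N:ℝ)) * |deriv (deriv X) s| := hadj
      _ = (1/(N:ℝ)) * α := by
          rw [ha0, haN, intervalIntegral.integral_const_mul, hα]
  -- pointwise facts about q and v
  have hq0 : q 0 = 0 := by simp [hq, h0]
  have hqN : q N = 0 := by
    simp only [hq]
    rw [div_self (ne_of_gt hNR), h1]
    ring
  have hv0 : v 0 = 0 := by simp [hv]
  have hvN : v N = 0 := by
    simp only [hv]
    rw [show Real.pi * (N:ℝ) * j / N = j * Real.pi by field_simp]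
    exact Real.sin_nat_mul_pi j
  have hvabs : ∀ i, |v i| ≤ 1 := fun i =>
    abs_le.mpr ⟨Real.neg_one_le_sin _, Real.sin_le_one _⟩
  have vrec : ∀ i : ℕ, v (i+2) + v i = 2 * Real.cos (Real.pi * j / N) * v (i+1) := by
    intro i
    simp only [hv]
    push_cast
    rw [show Real.pi * ((i:ℝ)+2) * j / N
          = Real.pi * ((i:ℝ)+1) * j / N + Real.pi * j / N by ring,
        show Real.pi * (i:ℝ) * j / N
          = Real.pi * ((i:ℝ)+1) * j / N - Real.pi * j / N by ring,
        Real.sin_add, Real.sin_sub]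
    ring
  -- second-difference bound
  have hD : ∀ i : ℕ, |2*q (i+1) - q (i+2) - q i| ≤ (1/(N:ℝ)) * (A i + B (i+1)) := by
    intro i
    have e1 : |(a (i+1) - a i) * deriv X (a (i+1)) - X (a (i+1)) + X (a i)| ≤ A i :=
      keyL X hX (a i) (a (i+1)) (haste i)
    have e2 : |X (a (i+2)) - (a (i+2) - a (i+1)) * deriv X (a (i+1)) - X (a (i+1))| ≤ B (i+1) :=
      keyR X hX (a (i+1)) (a (i+2)) (haste (i+1))
    have hstep2 : a (i+2) - a (i+1) = a (i+1) - a i := by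
      rw [hak (i+1), hak i]; ring
    have hqid : 2*q (i+1) - q (i+2) - q i
        = -((1/(N:ℝ)) * (X (a (i+2)) - 2*X (a (i+1)) + X (a i))) := by
      simp only [hq, ha]
      push_cast
      ring
    rw [hqid, abs_neg, abs_mul, abs_of_nonneg (le_of_lt (one_div_pos.mpr hNR))]
    apply mul_le_mul_of_nonneg_left _ (le_of_lt (one_div_pos.mpr hNR))
    have hdecomp : X (a (i+2)) - 2*X (a (i+1)) + X (a i)
        = (X (a (i+2)) - (a (i+2) - a (i+1)) * deriv X (a (i+1)) - X (a (i+1)))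
          + ((a (i+1) - a i) * deriv X (a (i+1)) - X (a (i+1)) + X (a i)) := by
      rw [hstep2]; ring
    rw [hdecomp]
    calc |_ + _| ≤ _ := abs_add_le _ _
      _ ≤ B (i+1) + A i := add_le_add e2 e1
      _ = A i + B (i+1) := add_comm _ _
  -- eigenvalue identity
  have hlamS : (2 - 2*Real.cos (Real.pi * j / N)) * (∑ i ∈ Finset.range (N-1), q (i+1) * v (i+1))
      = ∑ i ∈ Finset.range (N-1), (2*q (i+1) - q (i+2) - q i) * v (i+1) := by
    have shift1 : ∑ i ∈ Finset.range (N-1), q (i+1) * v (i+2)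
        = ∑ i ∈ Finset.range (N-1), q i * v (i+1) := by
      have h := sum_shift (fun i => q i * v (i+1)) (N-1)
        (by simp [hq0]) (by show q (N-1) * v (N-1+1) = 0; rw [show N-1+1 = N by omega, hvN]; ring)
      exact h
    have shift2 : ∑ i ∈ Finset.range (N-1), q (i+2) * v (i+1)
        = ∑ i ∈ Finset.range (N-1), q (i+1) * v i := by
      have h := sum_shift (fun i => q (i+1) * v i) (N-1)
        (by simp [hv0]) (by show q (N-1+1) * v (N-1) = 0; rw [show N-1+1 = N by omega, hqN]; ring)
      exact h
    rw [Finset.mul_sum]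
    calc ∑ i ∈ Finset.range (N-1), (2 - 2*Real.cos (Real.pi * j / N)) * (q (i+1) * v (i+1))
        = ∑ i ∈ Finset.range (N-1), (q (i+1) * (2 * v (i+1) - (v (i+2) + v i))) := by
          apply Finset.sum_congr rfl
          intro i _
          have h := vrec i
          linear_combination q (i+1) * h
      _ = ∑ i ∈ Finset.range (N-1), (2 * (q (i+1) * v (i+1))) - ∑ i ∈ Finset.range (N-1), q (i+1) * v (i+2) - ∑ i ∈ Finset.range (N-1), q (i+1) * v i := by
          rw [← Finset.sum_sub_distrib, ← Finset.sum_sub_distrib]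
          apply Finset.sum_congr rfl
          intro i _
          ring
      _ = ∑ i ∈ Finset.range (N-1), (2 * (q (i+1) * v (i+1))) - ∑ i ∈ Finset.range (N-1), q i * v (i+1) - ∑ i ∈ Finset.range (N-1), q (i+2) * v (i+1) := by
          rw [shift1, shift2]
      _ = ∑ i ∈ Finset.range (N-1), (2*q (i+1) - q (i+2) - q i) * v (i+1) := by
          rw [← Finset.sum_sub_distrib, ← Finset.sum_sub_distrib]
          apply Finset.sum_congr rfl
          intro i _
          ring
  -- the main estimate
  have hfull : (2 - 2*Real.cos (Real.pi * j / N)) * |∑ i ∈ Finset.range (N-1), q (i+1) * v (i+1)|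
      ≤ (1/(N:ℝ)) * ((1/(N:ℝ)) * α) := by
    have hlampos0 : (0:ℝ) ≤ 2 - 2*Real.cos (Real.pi * j / N) := by
      have := Real.cos_le_one (Real.pi * j / N)
      linarith
    calc (2 - 2*Real.cos (Real.pi * j / N)) * |∑ i ∈ Finset.range (N-1), q (i+1) * v (i+1)|
        = |(2 - 2*Real.cos (Real.pi * j / N)) * ∑ i ∈ Finset.range (N-1), q (i+1) * v (i+1)| := by
          rw [abs_mul, abs_of_nonneg hlampos0]
      _ = |∑ i ∈ Finset.range (N-1), (2*q (i+1) - q (i+2) - q i) * v (i+1)| := by rw [hlamS]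
      _ ≤ ∑ i ∈ Finset.range (N-1), |(2*q (i+1) - q (i+2) - q i) * v (i+1)| :=
          Finset.abs_sum_le_sum_abs _ _
      _ ≤ ∑ i ∈ Finset.range (N-1), (1/(N:ℝ)) * (A i + B (i+1)) := by
          apply Finset.sum_le_sum
          intro i _
          rw [abs_mul]
          calc |2*q (i+1) - q (i+2) - q i| * |v (i+1)|
              ≤ |2*q (i+1) - q (i+2) - q i| * 1 :=
                mul_le_mul_of_nonneg_left (hvabs _) (abs_nonneg _)
            _ = |2*q (i+1) - q (i+2) - q i| := mul_one _
            _ ≤ (1/(N:ℝ)) * (A i + B (i+1)) := hD i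
      _ = (1/(N:ℝ)) * ∑ i ∈ Finset.range (N-1), (A i + B (i+1)) := by rw [Finset.mul_sum]
      _ ≤ (1/(N:ℝ)) * ∑ k ∈ Finset.range N, (A k + B k) := by
          apply mul_le_mul_of_nonneg_left _ (le_of_lt (one_div_pos.mpr hNR))
          rw [Finset.sum_add_distrib, Finset.sum_add_distrib]
          have hA' : ∑ i ∈ Finset.range (N-1), A i ≤ ∑ k ∈ Finset.range N, A k :=
            Finset.sum_le_sum_of_subset_of_nonneg
              (Finset.range_subset_range.mpr (by omega)) (fun k _ _ => hAnn k)
          have hBshift := Finset.sum_range_succ' B (N-1)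
          rw [show N-1+1 = N by omega] at hBshift
          have hB' : ∑ i ∈ Finset.range (N-1), B (i+1) ≤ ∑ k ∈ Finset.range N, B k := by
            rw [hBshift]
            linarith [hBnn 0]
          linarith
      _ = (1/(N:ℝ)) * ((1/(N:ℝ)) * α) := by rw [htot]
  -- lower bound on the eigenvalue
  have hsin' : (j:ℝ)/N ≤ Real.sin (Real.pi * j / (2*N)) := by
    have hd0' : (0:ℝ) ≤ Real.pi * j / (2*N) := by positivity
    have hd1' : Real.pi * j / (2*N) ≤ Real.pi / 2 := by
      rw [div_le_div_iff₀ (by positivity) two_pos]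
      nlinarith [Real.pi_pos]
    have hs := Real.mul_le_sin hd0' hd1'
    have heq : 2/Real.pi * (Real.pi * j / (2*N)) = (j:ℝ)/N := by
      field_simp
    linarith [hs, heq ▸ hs]
  have hcosid : Real.cos (Real.pi * j / N) = 1 - 2*Real.sin (Real.pi * j / (2*N))^2 := by
    have h2 := Real.cos_two_mul (Real.pi * j / (2*N))
    have h3 := Real.sin_sq_add_cos_sq (Real.pi * j / (2*N))
    rw [show Real.pi * (j:ℝ) / N = 2*(Real.pi * j / (2*N)) by
      field_simp]
    rw [h2]; linarith
  have hlamge : 4*((j:ℝ)^2/(N:ℝ)^2) ≤ 2 - 2*Real.cos (Real.pi * j / N) := by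
    rw [hcosid]
    have hb : ((j:ℝ)/N)^2 ≤ Real.sin (Real.pi * j / (2*N))^2 := by
      have hnn : (0:ℝ) ≤ (j:ℝ)/N := by positivity
      nlinarith [hsin']
    have : ((j:ℝ)/N)^2 = (j:ℝ)^2/(N:ℝ)^2 := by rw [div_pow]
    nlinarith
  -- conclude |S| ≤ α/4/j²
  have habs : |∑ i ∈ Finset.range (N-1), q (i+1) * v (i+1)| ≤ α / 4 / (j:ℝ)^2 := by
    set S := ∑ i ∈ Finset.range (N-1), q (i+1) * v (i+1) with hS
    have e : 4*((j:ℝ)^2/(N:ℝ)^2) * |S| ≤ (1/(N:ℝ)) * ((1/(N:ℝ)) * α) :=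
      le_trans (mul_le_mul_of_nonneg_right hlamge (abs_nonneg _)) hfull
    have hN2 : (0:ℝ) < (N:ℝ)^2 := by positivity
    rw [div_div, le_div_iff₀ (by positivity : (0:ℝ) < 4*(j:ℝ)^2)]
    have e' : 4*(j:ℝ)^2 * |S| / (N:ℝ)^2 ≤ α / (N:ℝ)^2 := by
      calc 4*(j:ℝ)^2 * |S| / (N:ℝ)^2 = 4*((j:ℝ)^2/(N:ℝ)^2) * |S| := by ring
        _ ≤ (1/(N:ℝ)) * ((1/(N:ℝ)) * α) := e
        _ = α / (N:ℝ)^2 := by ring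
    rw [div_le_div_iff₀ hN2 hN2] at e'
    nlinarith [e', hN2]
  -- convert the goal sum
  have hgoal_sum : (∑ i ∈ Finset.Icc 1 (N-1),
        ((1 / (N:ℝ)) * X ((i : ℝ) / N) - 1 / N) * Real.sin (Real.pi * i * j / N))
      = ∑ i ∈ Finset.range (N-1), q (i+1) * v (i+1) := by
    rw [← Finset.Ico_add_one_right_eq_Icc, show N-1+1 = N by omega, Finset.sum_Ico_eq_sum_range]
    apply Finset.sum_congr rfl
    intro i _
    simp only [hq, hv]
    rw [Nat.add_comm 1 i]
  rw [hgoal_sum, abs_mul, abs_of_nonneg (Real.sqrt_nonneg _)]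
  calc Real.sqrt (2/N) * |∑ i ∈ Finset.range (N-1), q (i+1) * v (i+1)|
      ≤ Real.sqrt (2/N) * (α / 4 / (j:ℝ)^2) :=
        mul_le_mul_of_nonneg_left habs (Real.sqrt_nonneg _)
    _ = 1/4 * Real.sqrt (2/N) * α / (j:ℝ)^2 := by ring
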